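/- Let G = (G₁, …, G_k) and H = (H₁, …, H_k) be independent random vectors on a probability space with all coordinates square-integrable. Then ∫ Var(∑ᵢ gᵢ·Hᵢ) dμ_G(g) ≥ Var(∑ᵢ E[Gᵢ]·Hᵢ), where μ_G denotes the law of G; that is, the average over G of the variance (over H) of the inner product ⟨g, H⟩ is at least the variance of ⟨E[G], H⟩. -/

import Mathlib

open MeasureTheory ProbabilityTheory Finset

private lemma mul_int {Ω : Type*} {mΩ : MeasurableSpace Ω} {μ : Measure Ω}
    [IsProbabilityMeasure μ] {f g : Ω → ℝ} (hf : MemLp f 2 μ) (hg : MemLp g 2 μ) :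
    Integrable (fun ω => f ω * g ω) μ := by
  have h : MemLp (f • g) 1 μ := hg.smul hf
  exact h.integrable le_rfl

/-- Conservativeness inequality: for independent square-integrable random vectors `G`
and `H`, the average over the law of `G` of the variance of `⟨g, H⟩` is at least the
variance of `⟨E[G], H⟩`. -/
theorem stmt_11 {Ω : Type*} {mΩ : MeasurableSpace Ω} {μ : Measure Ω} [IsProbabilityMeasure μ]
    {k : ℕ} (G H : Ω → Fin k → ℝ) (hGmeas : Measurable G) (hHmeas : Measurable H)
    (hG2 : ∀ i, MemLp (fun ω => G ω i) 2 μ) (hH2 : ∀ i, MemLp (fun ω => H ω i) 2 μ)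
    (hindep : IndepFun G H μ) :
    variance (fun ω => ∑ i, (∫ ω', G ω' i ∂μ) * H ω i) μ
      ≤ ∫ g, variance (fun ω => ∑ i, g i * H ω i) μ ∂(Measure.map G μ) := by
  set m : Fin k → ℝ := fun i => ∫ ω', G ω' i ∂μ with hm
  set n : Fin k → ℝ := fun i => ∫ ω', H ω' i ∂μ with hn
  set C : Fin k → Fin k → ℝ := fun i j => (∫ ω, H ω i * H ω j ∂μ) - n i * n j with hC
  have hHint : ∀ i, Integrable (fun ω => H ω i) μ := fun i => (hH2 i).integrable one_le_two
  have hGint : ∀ i, Integrable (fun ω => G ω i) μ := fun i => (hG2 i).integrable one_le_two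
  have hHmul : ∀ i j, Integrable (fun ω => H ω i * H ω j) μ :=
    fun i j => mul_int (hH2 i) (hH2 j)
  have hGmul : ∀ i j, Integrable (fun ω => G ω i * G ω j) μ :=
    fun i j => mul_int (hG2 i) (hG2 j)
  -- Key formula: variance of a fixed linear combination of the H's
  have keyA : ∀ a : Fin k → ℝ,
      variance (fun ω => ∑ i, a i * H ω i) μ = ∑ i, ∑ j, a i * a j * C i j := by
    intro a
    have hmem : MemLp (fun ω => ∑ i, a i * H ω i) 2 μ := by
      have h := memLp_finset_sum' (μ := μ) Finset.univ
        (f := fun i => fun ω => a i * H ω i) (fun i _ => (hH2 i).const_mul (a i))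
      convert h using 1
      funext ω
      simp
    rw [variance_eq_sub hmem]
    have h1 : (∫ ω, ∑ i, a i * H ω i ∂μ) = ∑ i, a i * n i := by
      rw [integral_finset_sum _ (fun i _ => (hHint i).const_mul (a i))]
      refine Finset.sum_congr rfl fun i _ => ?_
      rw [integral_const_mul]
    have h2 : (∫ ω, (∑ i, a i * H ω i) ^ 2 ∂μ)
        = ∑ i, ∑ j, a i * a j * ∫ ω, H ω i * H ω j ∂μ := by
      have he : ∀ ω, (∑ i, a i * H ω i) ^ 2
          = ∑ i, ∑ j, a i * a j * (H ω i * H ω j) := by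
        intro ω
        rw [sq, Finset.sum_mul_sum]
        exact Finset.sum_congr rfl fun i _ => Finset.sum_congr rfl fun j _ => by ring
      simp_rw [he]
      rw [integral_finset_sum _ (fun i _ => integrable_finset_sum _
        (fun j _ => ((hHmul i j).const_mul _)))]
      refine Finset.sum_congr rfl fun i _ => ?_
      rw [integral_finset_sum _ (fun j _ => ((hHmul i j).const_mul _))]
      exact Finset.sum_congr rfl fun j _ => integral_const_mul _ _
    have hb : (μ[(fun ω => ∑ i, a i * H ω i) ^ 2]) = ∫ ω, (∑ i, a i * H ω i) ^ 2 ∂μ := by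
      apply integral_congr_ae
      filter_upwards with ω
      simp
    have hb' : (μ[fun ω => ∑ i, a i * H ω i]) = ∑ i, a i * n i := h1
    rw [hb, h2, hb']
    rw [sq, Finset.sum_mul_sum, ← Finset.sum_sub_distrib]
    refine Finset.sum_congr rfl fun i _ => ?_
    rw [← Finset.sum_sub_distrib]
    refine Finset.sum_congr rfl fun j _ => ?_
    simp only [hC]
    ring
  -- rewrite LHS
  rw [keyA m]
  -- rewrite RHS
  have hRHS : (∫ g, variance (fun ω => ∑ i, g i * H ω i) μ ∂(Measure.map G μ))
      = ∑ i, ∑ j, (∫ ω, G ω i * G ω j ∂μ) * C i j := by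
    have hmeasf : AEStronglyMeasurable (fun g : Fin k → ℝ => ∑ i, ∑ j, g i * g j * C i j)
        (Measure.map G μ) := by
      refine Measurable.aestronglyMeasurable ?_
      exact Finset.measurable_sum _ fun i _ => Finset.measurable_sum _ fun j _ =>
        ((measurable_pi_apply i).mul (measurable_pi_apply j)).mul_const _
    calc (∫ g, variance (fun ω => ∑ i, g i * H ω i) μ ∂(Measure.map G μ))
        = ∫ g, ∑ i, ∑ j, g i * g j * C i j ∂(Measure.map G μ) :=
          integral_congr_ae (Filter.Eventually.of_forall fun g => keyA g)
      _ = ∫ ω, ∑ i, ∑ j, G ω i * G ω j * C i j ∂μ :=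
          integral_map hGmeas.aemeasurable hmeasf
      _ = ∑ i, ∑ j, (∫ ω, G ω i * G ω j ∂μ) * C i j := by
          rw [integral_finset_sum _ (fun i _ => integrable_finset_sum _
            (fun j _ => ((hGmul i j).mul_const _)))]
          refine Finset.sum_congr rfl fun i _ => ?_
          rw [integral_finset_sum _ (fun j _ => ((hGmul i j).mul_const _))]
          exact Finset.sum_congr rfl fun j _ => integral_mul_const _ _
  rw [hRHS]
  -- covariance identity for G
  have key2 : ∀ i j, (∫ ω, (G ω i - m i) * (G ω j - m j) ∂μ)
      = (∫ ω, G ω i * G ω j ∂μ) - m i * m j := by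
    intro i j
    have he : ∀ ω, (G ω i - m i) * (G ω j - m j)
        = (G ω i * G ω j - m j * G ω i) - (m i * G ω j - m i * m j) := fun ω => by ring
    have i1 : Integrable (fun ω => G ω i * G ω j - m j * G ω i) μ := by
      exact (hGmul i j).sub ((hGint i).const_mul (m j))
    have i2 : Integrable (fun ω => m i * G ω j - m i * m j) μ := by
      exact ((hGint j).const_mul (m i)).sub (integrable_const _)
    simp_rw [he]
    rw [integral_sub i1 i2, integral_sub (hGmul i j) ((hGint i).const_mul (m j)),
      integral_sub ((hGint j).const_mul (m i)) (integrable_const _),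
      integral_const_mul, integral_const_mul, integral_const]
    simp only [measure_univ, ENNReal.toReal_one, probReal_univ, smul_eq_mul, one_mul, ← hm]
    ring
  have hGc2 : ∀ i, MemLp (fun ω => G ω i - m i) 2 μ :=
    fun i => (hG2 i).sub (memLp_const _)
  have hfinal : (∑ i, ∑ j, ((∫ ω, G ω i * G ω j ∂μ) * C i j - m i * m j * C i j))
      = ∫ ω, ∑ i, ∑ j, (G ω i - m i) * (G ω j - m j) * C i j ∂μ := by
    rw [integral_finset_sum _ (fun i _ => integrable_finset_sum _
      (fun j _ => ((mul_int (hGc2 i) (hGc2 j)).mul_const _)))]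
    refine Finset.sum_congr rfl fun i _ => ?_
    rw [integral_finset_sum _ (fun j _ => ((mul_int (hGc2 i) (hGc2 j)).mul_const _))]
    refine Finset.sum_congr rfl fun j _ => ?_
    rw [integral_mul_const, key2 i j]
    ring
  rw [← sub_nonneg, ← Finset.sum_sub_distrib]
  simp_rw [← Finset.sum_sub_distrib]
  rw [hfinal]
  refine integral_nonneg fun ω => ?_
  have hv := keyA (fun i => G ω i - m i)
  beta_reduce at hv
  rw [← hv]
  exact variance_nonneg _ _
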